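/- Suppose u : Y × Y → ℝ≥0 is nondegenerate and ℓ is a strictly proper loss function on the finite class set Y. Then for every q ∈ Δ(Y), the unique minimizer over p ∈ Δ(Y) of the expected utility-weighted loss Σ_y ℓ^u(p,y) q_y is given componentwise by p^u_y(q) = ū(y,q) / Σ_{y'} ū(y',q), where ū(y,q) = Σ_{y''} u(y,y'') q_{y''}. -/
import Mathlib


open Finset

/-- Theorem 1, Optimal Utility-Weighted Prediction: for a
nonnegative nondegenerate utility `u` and a strictly proper loss `ℓ`, the unique
minimizer of expected utility-weighted loss is the normalized expected-utility
vector. -/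
theorem optimal_utility_weighted_prediction {m : ℕ}
    (ℓ : (Fin m → ℝ) → Fin m → ℝ) (u : Fin m → Fin m → ℝ)
    (hu0 : ∀ y' y, 0 ≤ u y' y) (hnd : ∀ y : Fin m, ∃ a : Fin m, 0 < u a y)
    (hproper : ∀ q ∈ stdSimplex ℝ (Fin m), ∀ p ∈ stdSimplex ℝ (Fin m), p ≠ q →
      ∑ y : Fin m, ℓ q y * q y < ∑ y : Fin m, ℓ p y * q y)
    (q : Fin m → ℝ) (hq : q ∈ stdSimplex ℝ (Fin m)) :
    let ubar : Fin m → ℝ := fun y => ∑ y'' : Fin m, u y y'' * q y''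
    let pu : Fin m → ℝ := fun y => ubar y / ∑ y' : Fin m, ubar y'
    pu ∈ stdSimplex ℝ (Fin m) ∧
      ∀ p ∈ stdSimplex ℝ (Fin m), p ≠ pu →
        ∑ y : Fin m, (∑ y' : Fin m, ℓ pu y' * u y' y) * q y
          < ∑ y : Fin m, (∑ y' : Fin m, ℓ p y' * u y' y) * q y := by
  intro ubar pu
  obtain ⟨hq0, hq1⟩ := hq
  -- some coordinate of q is positive
  have hqpos : ∃ y, 0 < q y := by
    by_contra h
    push_neg at h
    have : ∑ y : Fin m, q y = 0 :=
      Finset.sum_eq_zero fun y _ => le_antisymm (h y) (hq0 y)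
    rw [hq1] at this; norm_num at this
  obtain ⟨y₀, hy₀⟩ := hqpos
  obtain ⟨a, ha⟩ := hnd y₀
  have hubar0 : ∀ y, 0 ≤ ubar y := fun y =>
    Finset.sum_nonneg fun y'' _ => mul_nonneg (hu0 y y'') (hq0 y'')
  set S : ℝ := ∑ y' : Fin m, ubar y' with hS
  have hSpos : 0 < S := by
    have h1 : 0 < ubar a := by
      have : 0 < u a y₀ * q y₀ := mul_pos ha hy₀
      calc (0:ℝ) < u a y₀ * q y₀ := this
        _ ≤ ubar a := Finset.single_le_sum (fun y'' _ =>
            mul_nonneg (hu0 a y'') (hq0 y'')) (Finset.mem_univ y₀)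
    exact lt_of_lt_of_le h1 (Finset.single_le_sum (fun y' _ => hubar0 y')
      (Finset.mem_univ a))
  have hSne : S ≠ 0 := ne_of_gt hSpos
  have hpuS : ∀ y, pu y * S = ubar y := fun y => div_mul_cancel₀ _ hSne
  have hpu : pu ∈ stdSimplex ℝ (Fin m) := by
    constructor
    · intro y; exact div_nonneg (hubar0 y) hSpos.le
    · rw [← Finset.sum_div, ← hS, div_self hSne]
  refine ⟨hpu, ?_⟩
  intro p hp hpne
  have key : ∀ r : Fin m → ℝ,
      ∑ y : Fin m, (∑ y' : Fin m, ℓ r y' * u y' y) * q y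
        = (∑ y' : Fin m, ℓ r y' * pu y') * S := by
    intro r
    rw [Finset.sum_mul]
    simp_rw [mul_assoc, hpuS, Finset.sum_mul, ubar, Finset.mul_sum]
    rw [Finset.sum_comm]
    exact Finset.sum_congr rfl fun y' _ => Finset.sum_congr rfl fun y _ => by ring
  rw [key pu, key p]
  have := hproper pu hpu p hp hpne
  exact mul_lt_mul_of_pos_right this hSpos
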